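/- arXiv:2203.08915 — 2 statements merged into one kernel-verified Lean document; each statement's English description precedes it below -/
import Mathlib

section
/- Host–Kra cube parametrization is injective, and the cube group of a finite filtered abelian group has cardinality ∏_{i≥0} |G_(i)|^C(n,i): let G be a finite abelian group with a filtration G = G_(0) ⊇ G_(1) ⊇ G_(2) ⊇ ⋯ (eventually trivial). For n ≥ 0, define Φ : ∏_{S ⊆ [n]} G_(|S|) → G^({0,1}^n) by Φ((g_S)_S)(v) = Σ_{S ⊆ [n]} (∏_{i∈S} v_i) • g_S. Then Φ is an injective group homomorphism; consequently its image, the Host–Kra cube group HK^n(G_•), has cardinality ∏_{i=0}^{n} |G_(i)|^(binom(n,i)). -/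
/-- The Host–Kra parametrization map: `(g_S)_S ↦ (v ↦ Σ_S (∏_{i∈S} v_i) • g_S)`. -/
def hkMap {G : Type*} [AddCommGroup G] (Gf : ℕ → AddSubgroup G) (n : ℕ)
    (g : (S : Finset (Fin n)) → Gf S.card) : (Fin n → Bool) → G :=
  fun v => ∑ S : Finset (Fin n), if ∀ i ∈ S, v i = true then (g S : G) else 0

lemma hkMap_eval {G : Type*} [AddCommGroup G] (Gf : ℕ → AddSubgroup G) (n : ℕ)
    (g : (S : Finset (Fin n)) → Gf S.card) (S : Finset (Fin n)) :
    hkMap Gf n g (fun i => decide (i ∈ S)) = ∑ T ∈ S.powerset, (g T : G) := by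
  unfold hkMap
  rw [← Finset.sum_filter]
  congr 1
  ext T
  simp [Finset.subset_iff]

lemma hkMap_inj {G : Type*} [AddCommGroup G] (Gf : ℕ → AddSubgroup G) (n : ℕ) :
    Function.Injective (hkMap Gf n) := by
  intro g g' h
  funext S
  induction S using Finset.strongInduction with
  | _ S ih =>
    have hS := congrFun h (fun i => decide (i ∈ S))
    rw [hkMap_eval, hkMap_eval] at hS
    have hmem : S ∈ S.powerset := Finset.mem_powerset.mpr Finset.Subset.rfl
    rw [← Finset.sum_erase_add _ _ hmem, ← Finset.sum_erase_add _ _ hmem] at hS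
    have hsum : ∑ T ∈ S.powerset.erase S, (g T : G)
        = ∑ T ∈ S.powerset.erase S, (g' T : G) := by
      refine Finset.sum_congr rfl fun T hT => ?_
      rw [Finset.mem_erase, Finset.mem_powerset] at hT
      rw [ih T (lt_of_le_of_ne hT.2 hT.1)]
    rw [hsum] at hS
    exact Subtype.ext (add_left_cancel hS)

theorem hkMap_injective_addHom_card
    {G : Type*} [AddCommGroup G] [Fintype G]
    (Gf : ℕ → AddSubgroup G) (hGf0 : Gf 0 = ⊤)
    (hmono : ∀ i, Gf (i + 1) ≤ Gf i)
    (htriv : ∃ N, ∀ i, N ≤ i → Gf i = ⊥) (n : ℕ) :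
    Function.Injective (hkMap Gf n) ∧
    (∀ a b, hkMap Gf n (a + b) = hkMap Gf n a + hkMap Gf n b) ∧
    Nat.card (Set.range (hkMap Gf n)) =
      ∏ i ∈ Finset.range (n + 1), Nat.card (Gf i) ^ Nat.choose n i := by
  refine ⟨hkMap_inj Gf n, ?_, ?_⟩
  · intro a b
    funext v
    unfold hkMap
    simp only [Pi.add_apply]
    rw [← Finset.sum_add_distrib]
    refine Finset.sum_congr rfl fun S _ => ?_
    split_ifs <;> simp
  · rw [Nat.card_range_of_injective (hkMap_inj Gf n), Nat.card_pi]
    have := Finset.prod_fiberwise_of_maps_to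
      (g := fun S : Finset (Fin n) => S.card) (s := Finset.univ)
      (t := Finset.range (n + 1))
      (fun S _ => Finset.mem_range.mpr (Nat.lt_succ_of_le (by
        simpa using Finset.card_le_card (Finset.subset_univ S))))
      (fun S => Nat.card (Gf S.card))
    rw [← this]
    refine Finset.prod_congr rfl fun i _ => ?_
    rw [Finset.prod_congr rfl (fun S hS => ?_), Finset.prod_const]
    · congr 1
      have : Finset.univ.filter (fun S : Finset (Fin n) => S.card = i)
          = Finset.powersetCard i Finset.univ := by
        rw [Finset.powersetCard_eq_filter, Finset.powerset_univ]
      rw [this, Finset.card_powersetCard]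
      simp
    · rw [Finset.mem_filter] at hS
      rw [hS.2]
end

section
/- Polynomial characterization of cubes of the degree-k nilspace 𝒟_k(A): let A be an abelian group, n ≥ 0 and k ≥ 0. A function q : {0,1}^n → A satisfies the condition that for every (k+1)-element subset S = {s_1 < ⋯ < s_(k+1)} ⊆ [n] and every assignment w ∈ {0,1}^([n]∖S) of the remaining coordinates, Σ_{u ∈ {0,1}^(k+1)} (−1)^(u_1+⋯+u_(k+1)) q(ι_{S,w}(u)) = 0 (where ι_{S,w}(u) ∈ {0,1}^n has coordinate u_j at s_j and w elsewhere), if and only if there exist elements z_S ∈ A for each S ⊆ [n] with |S| ≤ k such that q(v) = Σ_{S ⊆ [n], |S| ≤ k} (∏_{i∈S} v_i) • z_S for all v ∈ {0,1}^n. -/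
open Finset

section AuxCube

variable {α : Type*} [DecidableEq α] {A : Type*} [AddCommGroup A]

lemma aux_sign_interval (U V : Finset α) (hUV : U ⊆ V) :
    ∑ T ∈ V.powerset.filter (fun T => U ⊆ T), (-1 : ℤ) ^ (T \ U).card
      = if U = V then 1 else 0 := by
  rw [Finset.sum_nbij' (i := fun T => T \ U) (j := fun W => W ∪ U)
    (t := (V \ U).powerset) (g := fun W => (-1 : ℤ) ^ W.card)]
  · rw [Finset.sum_powerset_neg_one_pow_card]
    by_cases h : U = V
    · simp [h]
    · rw [if_neg h, if_neg]
      simp only [Finset.sdiff_eq_empty_iff_subset]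
      exact fun hv => h (Finset.Subset.antisymm hUV hv)
  · intro T hT
    simp only [mem_filter, mem_powerset] at hT
    simp only [mem_powerset]
    exact sdiff_subset_sdiff hT.1 (le_refl U)
  · intro W hW
    simp only [mem_powerset] at hW
    simp only [mem_filter, mem_powerset]
    constructor
    · exact union_subset (hW.trans (sdiff_subset)) hUV
    · exact subset_union_right
  · intro T hT
    simp only [mem_filter, mem_powerset] at hT
    exact sdiff_union_of_subset hT.2
  · intro W hW
    simp only [mem_powerset] at hW
    rw [union_sdiff_right]
    exact sdiff_eq_self_iff_disjoint.mpr (disjoint_of_subset_left hW sdiff_disjoint)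
  · intro T hT; rfl

lemma aux_sign_interval' (U₀ V : Finset α) (h : U₀ ⊆ V) (hne : U₀ ≠ V) :
    ∑ U ∈ V.powerset.filter (fun U => U₀ ⊆ U), (-1 : ℤ) ^ U.card = 0 := by
  have hc : ∀ U ∈ V.powerset.filter (fun U => U₀ ⊆ U),
      (-1 : ℤ) ^ U.card = (-1 : ℤ) ^ U₀.card * (-1 : ℤ) ^ (U \ U₀).card := by
    intro U hU
    simp only [mem_filter, mem_powerset] at hU
    rw [← pow_add]
    congr 1
    have := Finset.card_sdiff_add_card_eq_card hU.2
    omega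
  rw [Finset.sum_congr rfl hc, ← Finset.mul_sum, aux_sign_interval U₀ V h,
    if_neg hne, mul_zero]

lemma aux_mem_umap (S : Finset α) (u : {i : α // i ∈ S} → Bool) (a : α) :
    a ∈ (univ.filter fun i : {i : α // i ∈ S} => u i = true).map
        ⟨Subtype.val, Subtype.val_injective⟩ ↔ ∃ h : a ∈ S, u ⟨a, h⟩ = true := by
  simp only [Finset.mem_map, Finset.mem_filter, Finset.mem_univ, true_and,
    Function.Embedding.coeFn_mk]
  constructor
  · rintro ⟨⟨b, hb⟩, hub, rfl⟩; exact ⟨hb, hub⟩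
  · rintro ⟨h, hu⟩; exact ⟨⟨a, h⟩, hu, rfl⟩

lemma aux_face_reindex (q : (α → Bool) → A) [Fintype α]
    (S : Finset α) (w : α → Bool) :
    (∑ u : {i : α // i ∈ S} → Bool,
        ((-1 : ℤ) ^ (Finset.univ.filter fun i => u i = true).card) •
          q (fun i => if h : i ∈ S then u ⟨i, h⟩ else w i))
    = ∑ U ∈ S.powerset, (-1 : ℤ) ^ U.card •
        q (fun i => if i ∈ S then decide (i ∈ U) else w i) := by
  refine Finset.sum_nbij'
    (i := fun u => (univ.filter fun i : {i : α // i ∈ S} => u i = true).map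
        ⟨Subtype.val, Subtype.val_injective⟩)
    (j := fun U => fun i => decide (i.1 ∈ U)) ?_ ?_ ?_ ?_ ?_
  · intro u _
    simp only [mem_powerset]
    intro a ha
    rw [aux_mem_umap] at ha
    exact ha.1
  · intro U _; exact mem_univ _
  · intro u _
    funext i
    rw [Bool.eq_iff_iff, decide_eq_true_iff, aux_mem_umap]
    constructor
    · rintro ⟨h, hu⟩
      convert hu using 2
    · intro h; exact ⟨i.2, by convert h using 2⟩
  · intro U hU
    simp only [mem_powerset] at hU
    ext a
    rw [aux_mem_umap]
    simp only [decide_eq_true_iff]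
    exact ⟨fun ⟨_, h⟩ => h, fun h => ⟨hU h, h⟩⟩
  · intro u _
    have hcard : ((univ.filter fun i : {i : α // i ∈ S} => u i = true).map
        ⟨Subtype.val, Subtype.val_injective⟩).card
        = (univ.filter fun i : {i : α // i ∈ S} => u i = true).card :=
      Finset.card_map _
    rw [hcard]
    have hfun : (fun i => if h : i ∈ S then u ⟨i, h⟩ else w i)
        = fun i => if i ∈ S then
            decide (i ∈ (univ.filter fun j : {i : α // i ∈ S} => u j = true).map
              ⟨Subtype.val, Subtype.val_injective⟩) else w i := by
      funext i
      by_cases h : i ∈ S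
      · rw [dif_pos h, if_pos h, Bool.eq_iff_iff, decide_eq_true_iff, aux_mem_umap]
        exact ⟨fun hh => ⟨h, hh⟩, fun ⟨_, hh⟩ => hh⟩
      · rw [dif_neg h, if_neg h]
    rw [hfun]

/-- The discrete derivative coefficients. -/
def Dq (q : (α → Bool) → A) (T : Finset α) : A :=
  ∑ U ∈ T.powerset, (-1 : ℤ) ^ ((T \ U).card) • q (fun i => decide (i ∈ U))

lemma aux_inversion [Fintype α] (q : (α → Bool) → A) (v : α → Bool) :
    q v = ∑ T ∈ (Finset.univ.filter fun i => v i = true).powerset, Dq q T := by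
  set V := Finset.univ.filter fun i => v i = true with hV
  have hv : (fun i => decide (i ∈ V)) = v := by
    funext i
    simp [hV]
  unfold Dq
  rw [Finset.sum_comm' (s' := fun U => V.powerset.filter (fun T => U ⊆ T))
      (t' := V.powerset)
      (h := by
        intro T U
        simp only [mem_powerset, mem_filter]
        constructor
        · rintro ⟨h1, h2⟩; exact ⟨⟨h1, h2⟩, h2.trans h1⟩
        · rintro ⟨⟨h1, h2⟩, _⟩; exact ⟨h1, h2⟩)]
  have : ∀ U ∈ V.powerset,
      (∑ T ∈ V.powerset.filter (fun T => U ⊆ T),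
        (-1 : ℤ) ^ ((T \ U).card) • q (fun i => decide (i ∈ U)))
      = (if U = V then 1 else 0 : ℤ) • q (fun i => decide (i ∈ U)) := by
    intro U hU
    rw [← Finset.sum_smul, aux_sign_interval U V (mem_powerset.mp hU)]
  rw [Finset.sum_congr rfl this]
  simp only [ite_smul, one_smul, zero_smul, Finset.sum_ite_eq' V.powerset V]
  rw [if_pos (mem_powerset_self V), hv]

lemma aux_powerset_union_split (S W : Finset α) (hd : Disjoint S W) (f : Finset α → A) :
    ∑ R ∈ (S ∪ W).powerset, f R
      = ∑ U ∈ S.powerset, ∑ W' ∈ W.powerset, f (U ∪ W') := by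
  rw [← Finset.sum_product']
  refine Finset.sum_nbij' (i := fun R => (R ∩ S, R ∩ W)) (j := fun p => p.1 ∪ p.2)
    ?_ ?_ ?_ ?_ ?_
  · intro R hR
    simp only [mem_powerset] at hR
    simp only [Finset.mem_product, mem_powerset]
    exact ⟨inter_subset_right, inter_subset_right⟩
  · intro p hp
    simp only [Finset.mem_product, mem_powerset] at hp
    exact mem_powerset.mpr (union_subset_union hp.1 hp.2)
  · intro R hR
    simp only [mem_powerset] at hR
    show R ∩ S ∪ R ∩ W = R
    rw [← Finset.inter_union_distrib_left]
    exact (Finset.inter_eq_left.mpr hR)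
  · intro p hp
    simp only [Finset.mem_product, mem_powerset] at hp
    have h1 : p.2 ∩ S = ∅ := Finset.disjoint_iff_inter_eq_empty.mp
      (Finset.disjoint_of_subset_left hp.2 hd.symm)
    have h2 : p.1 ∩ W = ∅ := Finset.disjoint_iff_inter_eq_empty.mp
      (Finset.disjoint_of_subset_left hp.1 hd)
    show ((p.1 ∪ p.2) ∩ S, (p.1 ∪ p.2) ∩ W) = p
    rw [Finset.union_inter_distrib_right, Finset.union_inter_distrib_right,
      Finset.inter_eq_left.mpr hp.1, Finset.inter_eq_left.mpr hp.2, h1, h2,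
      Finset.union_empty, Finset.empty_union]
  · intro R hR
    simp only [mem_powerset] at hR
    show f R = f (R ∩ S ∪ R ∩ W)
    rw [← Finset.inter_union_distrib_left, Finset.inter_eq_left.mpr hR]

end AuxCube

lemma aux_neg_one_pow_sub (a b : ℕ) (hb : b ≤ a) :
    (-1 : ℤ) ^ (a - b) = (-1) ^ a * (-1) ^ b := by
  have h1 : (-1 : ℤ) ^ (a - b) * (-1) ^ b = (-1) ^ a := by
    rw [← pow_add, Nat.sub_add_cancel hb]
  have h2 : (-1 : ℤ) ^ b * (-1) ^ b = 1 := by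
    rw [← pow_add, ← two_mul, pow_mul]; norm_num
  calc (-1 : ℤ) ^ (a - b) = (-1) ^ (a - b) * ((-1) ^ b * (-1) ^ b) := by
        rw [h2, mul_one]
    _ = ((-1) ^ (a - b) * (-1) ^ b) * (-1) ^ b := by ring
    _ = (-1) ^ a * (-1) ^ b := by rw [h1]

theorem cube_iff_polynomial_param_degree_k
    {A : Type*} [AddCommGroup A] (n k : ℕ)
    (q : (Fin n → Bool) → A) :
    (∀ S : Finset (Fin n), S.card = k + 1 → ∀ w : Fin n → Bool,
      ∑ u : {i : Fin n // i ∈ S} → Bool,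
        ((-1 : ℤ) ^ (Finset.univ.filter fun i => u i = true).card) •
          q (fun i => if h : i ∈ S then u ⟨i, h⟩ else w i) = 0) ↔
    (∃ z : Finset (Fin n) → A, ∀ v : Fin n → Bool,
      q v = ∑ S ∈ Finset.univ.filter (fun S : Finset (Fin n) => S.card ≤ k),
        if ∀ i ∈ S, v i = true then z S else 0) := by
  classical
  constructor
  · intro H
    have H' : ∀ S : Finset (Fin n), S.card = k + 1 → ∀ w : Fin n → Bool,
        ∑ U ∈ S.powerset, (-1 : ℤ) ^ U.card •
          q (fun i => if i ∈ S then decide (i ∈ U) else w i) = 0 := by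
      intro S hS w
      rw [← aux_face_reindex]
      exact H S hS w
    have key : ∀ T : Finset (Fin n), k + 1 ≤ T.card → Dq q T = 0 := by
      intro T hT
      obtain ⟨S, hST, hScard⟩ := Finset.exists_subset_card_eq hT
      have hd : Disjoint S (T \ S) := Finset.disjoint_sdiff
      have hSW : S ∪ (T \ S) = T := Finset.union_sdiff_of_subset hST
      unfold Dq
      rw [← hSW, aux_powerset_union_split S (T \ S) hd, Finset.sum_comm]
      set W := T \ S with hW
      apply Finset.sum_eq_zero
      intro W' hW'
      have hW'W : W' ⊆ W := mem_powerset.mp hW'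
      have hdisj : ∀ x, x ∈ S → x ∉ W := fun x hx => Finset.disjoint_left.mp hd hx
      have hterm : ∀ U ∈ S.powerset,
          (-1 : ℤ) ^ (((S ∪ W) \ (U ∪ W')).card) • q (fun i => decide (i ∈ U ∪ W'))
          = ((-1 : ℤ) ^ S.card * (-1 : ℤ) ^ (W \ W').card) •
            ((-1 : ℤ) ^ U.card • q (fun i => if i ∈ S then decide (i ∈ U)
              else decide (i ∈ W'))) := by
        intro U hU
        have hUS : U ⊆ S := mem_powerset.mp hU
        have hset : (S ∪ W) \ (U ∪ W') = (S \ U) ∪ (W \ W') := by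
          ext x
          simp only [Finset.mem_sdiff, Finset.mem_union]
          have f1 : x ∈ U → x ∈ S := fun h => hUS h
          have f2 : x ∈ W' → x ∈ W := fun h => hW'W h
          have f3 := hdisj x
          tauto
        have hdsd : Disjoint (S \ U) (W \ W') :=
          Finset.disjoint_of_subset_left Finset.sdiff_subset
            (Finset.disjoint_of_subset_right Finset.sdiff_subset hd)
        have hcard : ((S ∪ W) \ (U ∪ W')).card = (S \ U).card + (W \ W').card := by
          rw [hset, Finset.card_union_of_disjoint hdsd]
        have hfun : (fun i => decide (i ∈ U ∪ W'))
            = fun i => if i ∈ S then decide (i ∈ U) else decide (i ∈ W') := by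
          funext i
          by_cases hi : i ∈ S
          · rw [if_pos hi, Bool.eq_iff_iff, decide_eq_true_iff, decide_eq_true_iff,
              Finset.mem_union]
            have : i ∉ W' := fun h => hdisj i hi (hW'W h)
            tauto
          · rw [if_neg hi, Bool.eq_iff_iff, decide_eq_true_iff, decide_eq_true_iff,
              Finset.mem_union]
            have : i ∉ U := fun h => hi (hUS h)
            tauto
        rw [hcard, hfun, smul_smul]
        congr 1
        rw [pow_add, Finset.card_sdiff_of_subset hUS,
          aux_neg_one_pow_sub S.card U.card (Finset.card_le_card hUS)]
        ring
      rw [Finset.sum_congr rfl hterm, ← Finset.smul_sum,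
        H' S hScard (fun i => decide (i ∈ W')), smul_zero]
    refine ⟨Dq q, fun v => ?_⟩
    rw [aux_inversion q v]
    set V := Finset.univ.filter fun i => v i = true with hV
    have hcond : ∀ T : Finset (Fin n), (∀ i ∈ T, v i = true) ↔ T ⊆ V := by
      intro T
      constructor
      · intro h i hi
        simp only [hV, Finset.mem_filter, Finset.mem_univ, true_and]
        exact h i hi
      · intro h i hi
        have := h hi
        simp only [hV, Finset.mem_filter, Finset.mem_univ, true_and] at this
        exact this
    calc ∑ T ∈ V.powerset, Dq q T
        = ∑ T ∈ V.powerset.filter (fun T => T.card ≤ k), Dq q T := by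
          rw [← Finset.sum_filter_add_sum_filter_not V.powerset (fun T => T.card ≤ k)]
          have hz : ∑ T ∈ V.powerset.filter (fun T => ¬ T.card ≤ k), Dq q T = 0 :=
            Finset.sum_eq_zero fun T hT => key T (by
              simp only [Finset.mem_filter] at hT; omega)
          rw [hz, add_zero]
      _ = ∑ T ∈ Finset.univ.filter (fun T : Finset (Fin n) => T.card ≤ k),
            if ∀ i ∈ T, v i = true then Dq q T else 0 := by
          rw [← Finset.sum_filter, Finset.filter_filter]
          apply Finset.sum_congr _ (fun _ _ => rfl)
          ext T
          simp only [Finset.mem_filter, Finset.mem_powerset, Finset.mem_univ, true_and]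
          rw [hcond T]
          tauto
  · rintro ⟨z, hq⟩ S hS w
    rw [aux_face_reindex]
    have hrw : ∀ U ∈ S.powerset,
        (-1 : ℤ) ^ U.card • q (fun i => if i ∈ S then decide (i ∈ U) else w i)
        = ∑ T ∈ Finset.univ.filter (fun T : Finset (Fin n) => T.card ≤ k),
            (-1 : ℤ) ^ U.card •
              (if ∀ i ∈ T, (if i ∈ S then decide (i ∈ U) else w i) = true
                then z T else 0) := by
      intro U _
      rw [hq, Finset.smul_sum]
    rw [Finset.sum_congr rfl hrw, Finset.sum_comm]
    apply Finset.sum_eq_zero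
    intro T hT
    simp only [Finset.mem_filter, Finset.mem_univ, true_and] at hT
    have hcond : ∀ U ∈ S.powerset,
        (∀ i ∈ T, (if i ∈ S then decide (i ∈ U) else w i) = true)
        ↔ (T ∩ S ⊆ U ∧ ∀ i ∈ T, i ∉ S → w i = true) := by
      intro U _
      constructor
      · intro h
        constructor
        · intro i hi
          rw [Finset.mem_inter] at hi
          have := h i hi.1
          rw [if_pos hi.2] at this
          exact of_decide_eq_true this
        · intro i hi hiS
          have := h i hi
          rwa [if_neg hiS] at this
      · rintro ⟨h1, h2⟩ i hi
        by_cases hiS : i ∈ S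
        · rw [if_pos hiS]
          exact decide_eq_true (h1 (Finset.mem_inter.mpr ⟨hi, hiS⟩))
        · rw [if_neg hiS]
          exact h2 i hi hiS
    have hterm : ∀ U ∈ S.powerset,
        (-1 : ℤ) ^ U.card •
          (if ∀ i ∈ T, (if i ∈ S then decide (i ∈ U) else w i) = true
            then z T else 0)
        = if T ∩ S ⊆ U then
            (-1 : ℤ) ^ U.card • (if ∀ i ∈ T, i ∉ S → w i = true then z T else 0)
          else 0 := by
      intro U hU
      by_cases h1 : T ∩ S ⊆ U
      · rw [if_pos h1]
        by_cases h2 : ∀ i ∈ T, i ∉ S → w i = true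
        · rw [if_pos h2, if_pos ((hcond U hU).mpr ⟨h1, h2⟩)]
        · rw [if_neg h2, if_neg (fun hh => h2 ((hcond U hU).mp hh).2), smul_zero]
      · rw [if_neg h1, if_neg (fun hh => h1 ((hcond U hU).mp hh).1), smul_zero]
    rw [Finset.sum_congr rfl hterm, ← Finset.sum_filter, ← Finset.sum_smul,
      aux_sign_interval' (T ∩ S) S Finset.inter_subset_right, zero_smul]
    intro hEq
    have h1 : S.card ≤ T.card := by
      rw [← hEq]
      exact Finset.card_le_card Finset.inter_subset_left
    omega
end
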